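/- Let N ≥ 1, let J ∈ M_N(ℂ), let λ⁺ ≠ λ⁻ be complex numbers, and let P, P̄ ∈ M_N(ℂ) satisfy P² = P, P̄² = P̄, P·P̄ = P̄·P = 0. For λ ∈ ℂ \ {λ⁺, λ⁻} set c(λ) = (λ − λ⁺)/(λ − λ⁻) and u(λ) := 1 + (c(λ) − 1)P + (c(λ)⁻¹ − 1)P̄. Then, as |λ| → ∞, λ·(J − u(λ)·J·u(λ)⁻¹) converges to (λ⁻ − λ⁺)·(J·(P − P̄) − (P − P̄)·J). (This identifies the difference of the dressed and seed potentials: Q₁ − Q₀ = (λ⁻ − λ⁺)[J, P − P̄].) -/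

import Mathlib

open Matrix Filter

/-- The dressing factor `u = 1 + (c − 1) P + (c⁻¹ − 1) P̄`. -/
noncomputable def dressU {N : ℕ} (c : ℂ) (P Pbar : Matrix (Fin N) (Fin N) ℂ) :
    Matrix (Fin N) (Fin N) ℂ :=
  1 + (c - 1) • P + (c⁻¹ - 1) • Pbar

lemma dressU_mul_inv {N : ℕ} (c : ℂ) (hc : c ≠ 0) (P Pbar : Matrix (Fin N) (Fin N) ℂ)
    (hP : P * P = P) (hPbar : Pbar * Pbar = Pbar)
    (hPPbar : P * Pbar = 0) (hPbarP : Pbar * P = 0) :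
    dressU c P Pbar * dressU c⁻¹ P Pbar = 1 := by
  simp only [dressU, inv_inv, add_mul, mul_add, one_mul, mul_one, Matrix.smul_mul,
    Matrix.mul_smul, hP, hPbar, hPPbar, hPbarP, smul_smul, smul_zero]
  match_scalars <;> (field_simp; try ring)

lemma dress_expand {N : ℕ} (c lam : ℂ) (J P Pbar : Matrix (Fin N) (Fin N) ℂ) :
    lam • (J - dressU c P Pbar * J * dressU c⁻¹ P Pbar) =
      (-(lam * (c⁻¹ - 1))) • (J * P) + (-(lam * (c - 1))) • (J * Pbar)
      + (-(lam * (c - 1))) • (P * J) + (-(lam * (c⁻¹ - 1))) • (Pbar * J)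
      + (-(lam * (c - 1) * (c⁻¹ - 1))) • (P * J * P)
      + (-(lam * (c - 1) * (c - 1))) • (P * J * Pbar)
      + (-(lam * (c⁻¹ - 1) * (c⁻¹ - 1))) • (Pbar * J * P)
      + (-(lam * (c⁻¹ - 1) * (c - 1))) • (Pbar * J * Pbar) := by
  simp only [dressU, inv_inv, add_mul, mul_add, one_mul, mul_one, Matrix.smul_mul,
    Matrix.mul_smul, smul_smul, smul_sub, mul_assoc]
  match_scalars <;> ring

/-- As `|λ| → ∞`, `λ (J − u(λ) J u(λ)⁻¹)` converges to
`(λ⁻ − λ⁺)[J, P − P̄]`, identifying the difference of dressed and seed potentials. -/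
theorem dressed_potential_limit (N : ℕ) (hN : 1 ≤ N)
    (J : Matrix (Fin N) (Fin N) ℂ) (lp lm : ℂ) (hll : lp ≠ lm)
    (P Pbar : Matrix (Fin N) (Fin N) ℂ)
    (hP : P * P = P) (hPbar : Pbar * Pbar = Pbar)
    (hPPbar : P * Pbar = 0) (hPbarP : Pbar * P = 0) :
    Tendsto
      (fun lam : ℂ => lam • (J - dressU ((lam - lp) / (lam - lm)) P Pbar * J
          * (dressU ((lam - lp) / (lam - lm)) P Pbar)⁻¹))
      (Bornology.cobounded ℂ)
      (nhds ((lm - lp) • (J * (P - Pbar) - (P - Pbar) * J))) := by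
  -- basic limits
  have hsub : ∀ a : ℂ, Tendsto (fun lam : ℂ => lam - a)
      (Bornology.cobounded ℂ) (Bornology.cobounded ℂ) := by
    intro a
    rw [← tendsto_norm_atTop_iff_cobounded]
    exact tendsto_atTop_mono (fun lam => norm_sub_norm_le lam a)
      (tendsto_atTop_add_const_right _ _ tendsto_norm_cobounded_atTop)
  have hinv : ∀ a : ℂ, Tendsto (fun lam : ℂ => (lam - a)⁻¹)
      (Bornology.cobounded ℂ) (nhds 0) := fun a =>
    tendsto_inv₀_cobounded.comp (hsub a)
  have hne : ∀ a : ℂ, ∀ᶠ lam : ℂ in Bornology.cobounded ℂ, lam ≠ a := by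
    intro a
    filter_upwards [eventually_cobounded_le_norm (‖a‖ + 1)] with lam h heq
    rw [heq] at h; linarith
  have hsm : ∀ k a : ℂ, Tendsto (fun lam : ℂ => k / (lam - a))
      (Bornology.cobounded ℂ) (nhds 0) := by
    intro k a
    simpa [div_eq_mul_inv] using (tendsto_const_nhds (x := k)).mul (hinv a)
  have hrat : ∀ k a : ℂ, Tendsto (fun lam : ℂ => lam * k / (lam - a))
      (Bornology.cobounded ℂ) (nhds k) := by
    intro k a
    have : Tendsto (fun lam : ℂ => k + k * a / (lam - a))
        (Bornology.cobounded ℂ) (nhds k) := by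
      simpa using (tendsto_const_nhds (x := k)).add (hsm (k * a) a)
    refine this.congr' ?_
    filter_upwards [hne a] with lam hla
    have h : lam - a ≠ 0 := sub_ne_zero.mpr hla
    field_simp
    ring
  -- the explicit rational-function form
  set H : ℂ → Matrix (Fin N) (Fin N) ℂ := fun lam =>
    (-(lam * (lp - lm) / (lam - lp))) • (J * P)
    + (-(lam * (lm - lp) / (lam - lm))) • (J * Pbar)
    + (-(lam * (lm - lp) / (lam - lm))) • (P * J)
    + (-(lam * (lp - lm) / (lam - lp))) • (Pbar * J)
    + (-(lam * (lm - lp) / (lam - lm) * ((lp - lm) / (lam - lp)))) • (P * J * P)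
    + (-(lam * (lm - lp) / (lam - lm) * ((lm - lp) / (lam - lm)))) • (P * J * Pbar)
    + (-(lam * (lp - lm) / (lam - lp) * ((lp - lm) / (lam - lp)))) • (Pbar * J * P)
    + (-(lam * (lp - lm) / (lam - lp) * ((lm - lp) / (lam - lm)))) • (Pbar * J * Pbar)
    with hH
  have hHlim : Tendsto H (Bornology.cobounded ℂ)
      (nhds ((lm - lp) • (J * (P - Pbar) - (P - Pbar) * J))) := by
    have := ((((((((((hrat (lp - lm) lp).neg.smul_const (J * P)).add
      ((hrat (lm - lp) lm).neg.smul_const (J * Pbar))).add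
      ((hrat (lm - lp) lm).neg.smul_const (P * J))).add
      ((hrat (lp - lm) lp).neg.smul_const (Pbar * J))).add
      (((hrat (lm - lp) lm).mul (hsm (lp - lm) lp)).neg.smul_const (P * J * P))).add
      (((hrat (lm - lp) lm).mul (hsm (lm - lp) lm)).neg.smul_const (P * J * Pbar))).add
      (((hrat (lp - lm) lp).mul (hsm (lp - lm) lp)).neg.smul_const (Pbar * J * P))).add
      (((hrat (lp - lm) lp).mul (hsm (lm - lp) lm)).neg.smul_const (Pbar * J * Pbar))))
    have hEq : (-(lp - lm)) • (J * P) + (-(lm - lp)) • (J * Pbar) + (-(lm - lp)) • (P * J)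
        + (-(lp - lm)) • (Pbar * J) + (-((lm - lp) * 0)) • (P * J * P)
        + (-((lm - lp) * 0)) • (P * J * Pbar) + (-((lp - lm) * 0)) • (Pbar * J * P)
        + (-((lp - lm) * 0)) • (Pbar * J * Pbar)
        = (lm - lp) • (J * (P - Pbar) - (P - Pbar) * J) := by
      simp only [mul_sub, sub_mul]
      match_scalars <;> ring
    rw [← hEq]
    exact this
  refine hHlim.congr' ?_
  filter_upwards [hne lp, hne lm] with lam hlp hlm
  have hp : lam - lp ≠ 0 := sub_ne_zero.mpr hlp
  have hm : lam - lm ≠ 0 := sub_ne_zero.mpr hlm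
  set c : ℂ := (lam - lp) / (lam - lm) with hc
  have hc0 : c ≠ 0 := div_ne_zero hp hm
  have hci : c⁻¹ = (lam - lm) / (lam - lp) := by rw [hc, inv_div]
  have hd : c - 1 = (lm - lp) / (lam - lm) := by
    rw [hc]; field_simp; try ring
  have he : c⁻¹ - 1 = (lp - lm) / (lam - lp) := by
    rw [hci]; field_simp; try ring
  have hu : (dressU c P Pbar)⁻¹ = dressU c⁻¹ P Pbar :=
    Matrix.inv_eq_right_inv (dressU_mul_inv c hc0 P Pbar hP hPbar hPPbar hPbarP)
  rw [hH]
  rw [hu, dress_expand c lam J P Pbar, hd, he]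
  match_scalars <;> ring
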